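/- arXiv:2105.04504 — 7 statements merged into one kernel-verified Lean document; each statement's English description precedes it below -/
import Mathlib

section
/- For every natural number p, the double integral ∫_0^π ( ∫_0^{x'} cos(2x)^p dx ) dx' equals ((p−1)!! / p!!) · π²/2 if p is even, and equals 0 if p is odd. -/
open Real Nat intervalIntegral

lemma cos_pow_two_pi_even (n : ℕ) :
    (∫ x in (0:ℝ)..(2*π), Real.cos x ^ (2*n)) =
      2 * π * ∏ i ∈ Finset.range n, (2 * (i : ℝ) + 1) / (2 * i + 2) := by
  induction n with
  | zero => simp
  | succ k ih =>
    rw [Finset.prod_range_succ_comm, mul_mul_mul_comm] at *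
    rw [Nat.mul_succ, integral_cos_pow, ih]
    simp [Real.sin_two_pi, Real.cos_two_pi]
    ring

lemma cos_pow_two_pi_odd (n : ℕ) :
    (∫ x in (0:ℝ)..(2*π), Real.cos x ^ (2*n+1)) = 0 := by
  induction n with
  | zero => simp
  | succ k ih =>
    have : 2*(k+1)+1 = (2*k+1) + 2 := by ring
    rw [this, integral_cos_pow, ih]
    simp [Real.sin_two_pi]

lemma df_prod (n : ℕ) :
    ((Nat.doubleFactorial (2*n - 1) : ℝ) / (Nat.doubleFactorial (2*n) : ℝ)) =
      ∏ i ∈ Finset.range n, (2 * (i : ℝ) + 1) / (2 * i + 2) := by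
  induction n with
  | zero => simp
  | succ k ih =>
    rw [Finset.prod_range_succ, ← ih]
    have h1 : 2 * (k+1) - 1 = (2*k - 1) + 2 ∨ k = 0 := by omega
    rcases h1 with h1 | h1
    · rw [h1, Nat.mul_succ, show 2*k+2 = (2*k)+2 from rfl]
      rw [Nat.doubleFactorial, Nat.doubleFactorial]
      have hk1 : ((2*k - 1) + 2 : ℕ) = 2*k + 1 := by omega
      push_cast [hk1]
      have hd0 : (0:ℝ) < (Nat.doubleFactorial (2*k) : ℝ) := by
        exact_mod_cast Nat.doubleFactorial_pos _
      field_simp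
    · subst h1; norm_num [Nat.doubleFactorial]

/-- `∫_0^π ∫_0^{x'} cos(2x)^p dx dx'` equals `((p−1)!!/p!!) · π²/2` for even `p`
and `0` for odd `p`. (For `p = 0`, `(p−1)!! = 0!! = 1` by the natural-subtraction
convention, so the value is `π²/2`.) -/
theorem integral_integral_cos_two_mul_pow (p : ℕ) :
    ∫ x' in (0:ℝ)..π, ∫ x in (0:ℝ)..x', Real.cos (2 * x) ^ p =
      if Even p then
        ((Nat.doubleFactorial (p - 1) : ℝ) / (Nat.doubleFactorial p : ℝ)) * (π ^ 2 / 2)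
      else 0 := by
  set f : ℝ → ℝ := fun x => Real.cos (2 * x) ^ p with hf
  have hfc : Continuous f := by fun_prop
  set I : ℝ → ℝ := fun x' => ∫ x in (0:ℝ)..x', f x with hI
  have hIc : Continuous I :=
    intervalIntegral.continuous_primitive (fun a b => hfc.intervalIntegrable a b) 0
  -- symmetry of f about π/2 ... period
  have hsym : ∀ x, f (π - x) = f x := by
    intro x
    simp only [hf]
    rw [mul_sub, Real.cos_sub]
    simp [Real.cos_two_pi, Real.sin_two_pi]
  have key : ∀ x', I (π - x') = I π - I x' := by
    intro x'
    have h1 : (∫ x in (0:ℝ)..(π - x'), f x) = ∫ x in x'..π, f x := by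
      calc (∫ x in (0:ℝ)..(π - x'), f x)
          = ∫ x in (0:ℝ)..(π - x'), f (π - x) :=
            intervalIntegral.integral_congr (fun x _ => (hsym x).symm)
        _ = ∫ x in (π - (π - x'))..(π - 0), f x :=
            intervalIntegral.integral_comp_sub_left f π
        _ = ∫ x in x'..π, f x := by norm_num
    have h2 : (∫ x in (0:ℝ)..x', f x) + ∫ x in x'..π, f x = ∫ x in (0:ℝ)..π, f x :=
      intervalIntegral.integral_add_adjacent_intervals (hfc.intervalIntegrable _ _)
        (hfc.intervalIntegrable _ _)
    simp only [hI]
    rw [h1]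
    linarith
  have houter : (∫ x' in (0:ℝ)..π, I x') = π / 2 * I π := by
    have h1 : (∫ x' in (0:ℝ)..π, I (π - x')) = ∫ x' in (0:ℝ)..π, I x' := by
      rw [intervalIntegral.integral_comp_sub_left I π]
      simp
    have h2 : (∫ x' in (0:ℝ)..π, I (π - x')) = ∫ x' in (0:ℝ)..π, (I π - I x') := by
      exact intervalIntegral.integral_congr (fun x _ => key x)
    have h3 : (∫ x' in (0:ℝ)..π, (I π - I x')) =
        π * I π - ∫ x' in (0:ℝ)..π, I x' := by
      rw [intervalIntegral.integral_sub (intervalIntegrable_const)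
        (hIc.intervalIntegrable _ _)]
      simp [mul_comm]
    have := h1.symm.trans (h2.trans h3)
    linarith
  have hIpi : I π = (1/2) * ∫ u in (0:ℝ)..(2*π), Real.cos u ^ p := by
    simp only [hI, hf]
    rw [intervalIntegral.integral_comp_mul_left (fun u => Real.cos u ^ p) (by norm_num : (2:ℝ) ≠ 0)]
    simp [smul_eq_mul]
  rw [houter, hIpi]
  rcases Nat.even_or_odd p with hp | hp
  · obtain ⟨n, rfl⟩ := hp
    have h2n : n + n = 2*n := (two_mul n).symm
    rw [h2n] at hIpi ⊢
    rw [if_pos (even_two_mul n), cos_pow_two_pi_even, df_prod]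
    ring
  · obtain ⟨n, rfl⟩ := hp
    rw [if_neg (by simp [Nat.odd_iff.mp ⟨n, rfl⟩, Nat.even_iff])]
    rw [cos_pow_two_pi_odd]
    ring
end

section
/- For all natural numbers n' and m with m even, ∫_0^π (π − x) · sin(x)^{2n'+1} · cos(x)^m dx = π · Σ_{i=0}^{n'} (−1)^i · binom(n', i) / (2i + m + 1). -/
open Real

lemma aux_J_eval (n' m : ℕ) (hm : Even m) :
    ∫ x in (0:ℝ)..π, Real.sin x ^ (2 * n' + 1) * Real.cos x ^ m =
      2 * ∑ i ∈ Finset.range (n' + 1),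
        (-1 : ℝ) ^ i * (n'.choose i : ℝ) / (2 * i + m + 1 : ℝ) := by
  rw [integral_sin_pow_odd_mul_cos_pow, Real.cos_zero, Real.cos_pi]
  have hexp : ∀ u : ℝ, u ^ m * (1 - u ^ 2) ^ n' =
      ∑ i ∈ Finset.range (n' + 1), (-1 : ℝ) ^ i * (n'.choose i : ℝ) * u ^ (m + 2 * i) := by
    intro u
    have : (1 - u ^ 2 : ℝ) ^ n' = ((-u ^ 2) + 1) ^ n' := by ring_nf
    rw [this, add_pow, Finset.mul_sum]
    refine Finset.sum_congr rfl fun i _ => ?_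
    rw [neg_pow, ← pow_mul]
    ring
  simp_rw [hexp]
  rw [intervalIntegral.integral_finset_sum]
  · rw [Finset.mul_sum]
    refine Finset.sum_congr rfl fun i _ => ?_
    rw [intervalIntegral.integral_const_mul, integral_pow]
    have he : Even (m + 2 * i) := hm.add (even_two_mul i)
    have h1 : ((-1 : ℝ)) ^ (m + 2 * i + 1) = -1 := by
      rw [pow_succ, he.neg_one_pow]; ring
    rw [one_pow, h1]
    have hd : ((m : ℝ) + 2 * i + 1) ≠ 0 := by positivity
    field_simp
    push_cast
    ring
  · intro i _
    exact (Continuous.intervalIntegrable (by fun_prop) _ _)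

/-- Closed form of `∫_0^π (π − x) sin^{2n'+1}(x) cos^m(x) dx` for even `m`. -/
theorem integral_pi_sub_mul_sin_odd_pow_mul_cos_even_pow (n' m : ℕ) (hm : Even m) :
    ∫ x in (0:ℝ)..π, (π - x) * Real.sin x ^ (2 * n' + 1) * Real.cos x ^ m =
      π * ∑ i ∈ Finset.range (n' + 1),
        (-1 : ℝ) ^ i * (n'.choose i : ℝ) / (2 * i + m + 1 : ℝ) := by
  set f : ℝ → ℝ := fun x => Real.sin x ^ (2 * n' + 1) * Real.cos x ^ m with hf
  have hfc : Continuous f := by fun_prop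
  have hsym : (∫ x in (0:ℝ)..π, (π - x) * f x) = ∫ x in (0:ℝ)..π, x * f x := by
    have h := intervalIntegral.integral_comp_sub_left
      (a := (0:ℝ)) (b := π) (fun x => x * f x) π
    simp only [sub_self, sub_zero] at h
    rw [← h]
    refine intervalIntegral.integral_congr fun x _ => ?_
    simp only [hf]
    rw [Real.sin_pi_sub, Real.cos_pi_sub, hm.neg_pow]
  have hadd : (∫ x in (0:ℝ)..π, (π - x) * f x) + (∫ x in (0:ℝ)..π, x * f x)
      = π * ∫ x in (0:ℝ)..π, f x := by
    rw [← intervalIntegral.integral_add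
      ((Continuous.intervalIntegrable (by fun_prop) _ _))
      ((Continuous.intervalIntegrable (by fun_prop) _ _)),
      ← intervalIntegral.integral_const_mul]
    refine intervalIntegral.integral_congr fun x _ => ?_
    ring
  have hJ := aux_J_eval n' m hm
  have hgoal : (∫ x in (0:ℝ)..π, (π - x) * f x) =
      π * ∑ i ∈ Finset.range (n' + 1),
        (-1 : ℝ) ^ i * (n'.choose i : ℝ) / (2 * i + m + 1 : ℝ) := by
    have : (∫ x in (0:ℝ)..π, f x) = 2 * ∑ i ∈ Finset.range (n' + 1),
        (-1 : ℝ) ^ i * (n'.choose i : ℝ) / (2 * i + m + 1 : ℝ) := hJ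
    rw [this] at hadd
    rw [hsym] at hadd ⊢
    linarith
  rw [← hgoal]
  refine intervalIntegral.integral_congr fun x _ => ?_
  simp only [hf]; ring
end

section
/- For all natural numbers n and m' with n even, ∫_0^π (π − x) · sin(x)^n · cos(x)^{2m'+1} dx = 2 · Σ_{i=0}^{m'} (−1)^i · binom(m', i) · (2i + n)!! / ( (2i + n + 1) · (2i + n + 1)!! ). -/
open Real

lemma prod_df (k : ℕ) : (∏ i ∈ Finset.range k, (2 * (i : ℝ) + 2) / (2 * i + 3)) =
    (Nat.doubleFactorial (2 * k) : ℝ) / (Nat.doubleFactorial (2 * k + 1) : ℝ) := by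
  induction k with
  | zero => simp [Nat.doubleFactorial]
  | succ k ih =>
    rw [Finset.prod_range_succ, ih]
    have h1 : 2 * (k + 1) = 2 * k + 2 := by ring
    rw [h1, show 2 * k + 2 + 1 = (2 * k + 1) + 2 from by ring,
      Nat.doubleFactorial_add_two, Nat.doubleFactorial_add_two]
    have p1 : (0:ℝ) < (Nat.doubleFactorial (2*k) : ℝ) := by exact_mod_cast Nat.doubleFactorial_pos _
    have p2 : (0:ℝ) < (Nat.doubleFactorial (2*k+1) : ℝ) := by exact_mod_cast Nat.doubleFactorial_pos _
    push_cast
    field_simp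
    ring

lemma sin_odd (k : ℕ) : (∫ x in (0:ℝ)..π, Real.sin x ^ (2 * k + 1)) =
    2 * (Nat.doubleFactorial (2 * k) : ℝ) / (Nat.doubleFactorial (2 * k + 1) : ℝ) := by
  rw [integral_sin_pow_odd, prod_df]; ring

lemma key (k : ℕ) : (∫ x in (0:ℝ)..π, (π - x) * Real.sin x ^ (2 * k) * Real.cos x) =
    2 * (Nat.doubleFactorial (2 * k) : ℝ) /
      ((2 * k + 1 : ℝ) * (Nat.doubleFactorial (2 * k + 1) : ℝ)) := by
  set c : ℝ := 2 * k + 1 with hc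
  have hcpos : (0:ℝ) < c := by positivity
  set F : ℝ → ℝ := fun x => (π - x) * Real.sin x ^ (2 * k + 1) / c with hF
  have hderiv : ∀ x ∈ Set.uIcc (0:ℝ) π, HasDerivAt F
      ((π - x) * Real.sin x ^ (2 * k) * Real.cos x - Real.sin x ^ (2 * k + 1) / c) x := by
    intro x _
    have h1 : HasDerivAt (fun x : ℝ => (π - x)) (-1) x := by
      simpa using (hasDerivAt_id x).const_sub π
    have h2 : HasDerivAt (fun x : ℝ => Real.sin x ^ (2 * k + 1))
        ((2 * k + 1 : ℕ) * Real.sin x ^ (2 * k) * Real.cos x) x := by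
      have := ((Real.hasDerivAt_sin x).fun_pow (2 * k + 1))
      simpa using this
    have := (h1.fun_mul h2).div_const c
    refine this.congr_deriv ?_
    push_cast
    field_simp
    ring
  have hcont : Continuous fun x : ℝ =>
      (π - x) * Real.sin x ^ (2 * k) * Real.cos x - Real.sin x ^ (2 * k + 1) / c := by
    fun_prop
  have h0 : (∫ x in (0:ℝ)..π,
      ((π - x) * Real.sin x ^ (2 * k) * Real.cos x - Real.sin x ^ (2 * k + 1) / c)) = F π - F 0 :=
    intervalIntegral.integral_eq_sub_of_hasDerivAt hderiv (hcont.intervalIntegrable _ _)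
  have hF0 : F π - F 0 = 0 := by simp [hF]
  have hint1 : IntervalIntegrable (fun x : ℝ => (π - x) * Real.sin x ^ (2 * k) * Real.cos x)
      MeasureTheory.volume 0 π := by
    apply Continuous.intervalIntegrable; fun_prop
  have hint2 : IntervalIntegrable (fun x : ℝ => Real.sin x ^ (2 * k + 1) / c)
      MeasureTheory.volume 0 π := by
    apply Continuous.intervalIntegrable; fun_prop
  have hsub := intervalIntegral.integral_sub hint1 hint2
  rw [h0, hF0] at hsub
  have : (∫ x in (0:ℝ)..π, (π - x) * Real.sin x ^ (2 * k) * Real.cos x) =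
      ∫ x in (0:ℝ)..π, Real.sin x ^ (2 * k + 1) / c := by linarith [hsub]
  rw [this, intervalIntegral.integral_div, sin_odd]
  have p2 : (0:ℝ) < (Nat.doubleFactorial (2*k+1) : ℝ) := by exact_mod_cast Nat.doubleFactorial_pos _
  field_simp

/-- Closed form of `∫_0^π (π − x) sin^n(x) cos^{2m'+1}(x) dx` for even `n`. -/
theorem integral_pi_sub_mul_sin_even_pow_mul_cos_odd_pow (n m' : ℕ) (hn : Even n) :
    ∫ x in (0:ℝ)..π, (π - x) * Real.sin x ^ n * Real.cos x ^ (2 * m' + 1) =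
      2 * ∑ i ∈ Finset.range (m' + 1),
        (-1 : ℝ) ^ i * (m'.choose i : ℝ) * (Nat.doubleFactorial (2 * i + n) : ℝ) /
          ((2 * i + n + 1 : ℝ) * (Nat.doubleFactorial (2 * i + n + 1) : ℝ)) := by
  obtain ⟨p, hp⟩ := hn
  have hn2 : n = 2 * p := by omega
  subst hn2
  have hexp : ∀ x : ℝ, (π - x) * Real.sin x ^ (2 * p) * Real.cos x ^ (2 * m' + 1) =
      ∑ i ∈ Finset.range (m' + 1), (-1 : ℝ) ^ i * (m'.choose i : ℝ) *
        ((π - x) * Real.sin x ^ (2 * (i + p)) * Real.cos x) := by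
    intro x
    have hcs : Real.cos x ^ (2 * m' + 1) = (1 - Real.sin x ^ 2) ^ m' * Real.cos x := by
      rw [pow_succ, pow_mul, Real.cos_sq']
    have hpow : (1 - Real.sin x ^ 2) ^ m' =
        ∑ i ∈ Finset.range (m' + 1), (-(Real.sin x ^ 2)) ^ i * (1:ℝ) ^ (m' - i) * (m'.choose i) := by
      rw [show (1 - Real.sin x ^ 2) = -(Real.sin x ^ 2) + 1 from by ring, add_pow]
    rw [hcs, hpow, Finset.sum_mul, Finset.mul_sum]
    apply Finset.sum_congr rfl
    intro i hi
    have : (-(Real.sin x ^ 2)) ^ i = (-1:ℝ)^i * Real.sin x ^ (2 * i) := by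
      rw [neg_pow, ← pow_mul]
    rw [this]
    rw [show 2 * (i + p) = 2 * p + 2 * i by ring, pow_add]
    ring
  rw [intervalIntegral.integral_congr (fun x _ => hexp x)]
  rw [intervalIntegral.integral_finset_sum]
  · rw [Finset.mul_sum]
    apply Finset.sum_congr rfl
    intro i hi
    rw [intervalIntegral.integral_const_mul, key (i + p)]
    have he : 2 * i + 2 * p = 2 * (i + p) := by ring
    rw [he]
    have hc : ((2 * (i + p) : ℕ) : ℝ) + 1 = 2 * (i + p : ℝ) + 1 := by push_cast; ring
    push_cast
    ring
  · intro i hi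
    apply Continuous.intervalIntegrable; fun_prop
end

section
/- For all natural numbers n' and m', ∫_0^π (π − x) · sin(x)^{2n'} · cos(x)^{2m'} dx = (π²/2) · 2^{−(n'+m')} · Σ_{i=0}^{n'} Σ_{j=0}^{m'} [i + j even] · (−1)^i · binom(n', i) · binom(m', j) · (i + j − 1)!! / (i + j)!!, where [i + j even] is 1 if i + j is even and 0 otherwise. -/
open Real

private lemma dfac_ratio (k : ℕ) :
    ((2 * k - 1).doubleFactorial : ℝ) / ((2 * k).doubleFactorial : ℝ) =
      ∏ i ∈ Finset.range k, (2 * (i : ℝ) + 1) / (2 * i + 2) := by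
  induction k with
  | zero => simp [Nat.doubleFactorial]
  | succ k ih =>
      rw [Finset.prod_range_succ, ← ih]
      have h1 : 2 * (k + 1) - 1 = 2 * k + 1 := by omega
      have h2 : 2 * (k + 1) = (2 * k) + 2 := by ring
      rw [h1, h2]
      have e1 : (2 * k + 1).doubleFactorial = (2 * k + 1) * (2 * k - 1).doubleFactorial := by
        cases k with
        | zero => simp [Nat.doubleFactorial]
        | succ k =>
            have h3 : 2 * (k + 1) + 1 = (2 * k + 1) + 2 := by ring
            have h4 : 2 * (k + 1) - 1 = 2 * k + 1 := by omega
            rw [h3, h4, Nat.doubleFactorial_add_two]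
      have e2 : (2 * k + 2).doubleFactorial = (2 * k + 2) * (2 * k).doubleFactorial :=
        Nat.doubleFactorial_add_two (2 * k)
      rw [e1, e2]
      push_cast
      have hd1 : ((2 * k).doubleFactorial : ℝ) ≠ 0 := by
        exact_mod_cast (Nat.doubleFactorial_pos _).ne'
      field_simp

private lemma sin_pow_periodic (p : ℕ) :
    Function.Periodic (fun x : ℝ => Real.sin x ^ p) (2 * π) := fun x => by
  simp [Real.sin_periodic x]

private lemma integral_cos_two_mul_pow (p : ℕ) :
    ∫ x in (0:ℝ)..π, Real.cos (2 * x) ^ p =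
      (if Even p then (1 : ℝ) else 0) * π *
        ((p - 1).doubleFactorial : ℝ) / (p.doubleFactorial : ℝ) := by
  have h2 : (2:ℝ) ≠ 0 := two_ne_zero
  have step1 : ∫ x in (0:ℝ)..π, Real.cos (2 * x) ^ p
      = (2:ℝ)⁻¹ • ∫ x in (0:ℝ)..(2*π), Real.cos x ^ p := by
    have := intervalIntegral.integral_comp_mul_left (fun x => Real.cos x ^ p) h2 (a := 0) (b := π)
    simpa using this
  have step2 : (∫ x in (0:ℝ)..(2*π), Real.cos x ^ p)
      = ∫ x in (0:ℝ)..(2*π), Real.sin x ^ p := by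
    have h1 : (∫ x in (0:ℝ)..(2*π), Real.cos x ^ p)
        = ∫ x in (0:ℝ)..(2*π), Real.sin (x + π/2) ^ p := by
      congr 1; ext x; rw [Real.sin_add_pi_div_two]
    rw [h1, intervalIntegral.integral_comp_add_right (fun x => Real.sin x ^ p) (π/2)]
    have := (sin_pow_periodic p).intervalIntegral_add_eq (π/2) 0
    simp only [zero_add] at this
    have hb : (2:ℝ)*π + π/2 = π/2 + 2*π := by ring
    rw [zero_add, hb, this]
  have step3 : (∫ x in (0:ℝ)..(2*π), Real.sin x ^ p)
      = (1 + (-1:ℝ)^p) * ∫ x in (0:ℝ)..π, Real.sin x ^ p := by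
    have hadd : (∫ x in (0:ℝ)..(2*π), Real.sin x ^ p)
        = (∫ x in (0:ℝ)..π, Real.sin x ^ p) + ∫ x in π..(2*π), Real.sin x ^ p := by
      rw [intervalIntegral.integral_add_adjacent_intervals] <;>
        exact (Continuous.pow Real.continuous_sin p).intervalIntegrable _ _
    have hshift : (∫ x in π..(2*π), Real.sin x ^ p)
        = (-1:ℝ)^p * ∫ x in (0:ℝ)..π, Real.sin x ^ p := by
      have := intervalIntegral.integral_comp_add_right (fun x => Real.sin x ^ p) π (a := 0) (b := π)
      simp only [zero_add] at this
      have hb : π + π = 2 * π := by ring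
      rw [hb] at this
      rw [← this, ← intervalIntegral.integral_const_mul]
      congr 1; ext x
      rw [Real.sin_add_pi, neg_pow]
    rw [hadd, hshift]; ring
  rw [step1, step2, step3]
  rcases Nat.even_or_odd p with hp | hp
  · obtain ⟨k, hk⟩ := hp
    have hk' : p = 2 * k := by omega
    subst hk'
    rw [integral_sin_pow_even, ← dfac_ratio k]
    have : ((-1:ℝ)) ^ (2 * k) = 1 := by
      rw [pow_mul]; norm_num
    rw [this, if_pos (even_two_mul k)]
    have hd : ((2 * k).doubleFactorial : ℝ) ≠ 0 := by
      exact_mod_cast (Nat.doubleFactorial_pos _).ne'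
    field_simp
    have hd' : ((k * 2).doubleFactorial : ℝ) ≠ 0 := by rw [mul_comm]; exact hd
    ring_nf
    field_simp
  · have : ((-1:ℝ)) ^ p = -1 := Odd.neg_one_pow hp
    rw [this, if_neg (by simpa using hp)]
    simp

set_option maxHeartbeats 2000000 in
/-- Closed form of `∫_0^π (π − x) sin^{2n'}(x) cos^{2m'}(x) dx` (both exponents even);
only terms with `i + j` even contribute, and `(p−1)!!` uses natural subtraction
(so `(0−1)!! = 0!! = 1`). -/
theorem integral_pi_sub_mul_sin_even_pow_mul_cos_even_pow (n' m' : ℕ) :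
    ∫ x in (0:ℝ)..π, (π - x) * Real.sin x ^ (2 * n') * Real.cos x ^ (2 * m') =
      (π ^ 2 / 2) * (2 : ℝ) ^ (-(n' + m' : ℤ)) *
        ∑ i ∈ Finset.range (n' + 1), ∑ j ∈ Finset.range (m' + 1),
          (if Even (i + j) then (1 : ℝ) else 0) *
            (-1 : ℝ) ^ i * (n'.choose i : ℝ) * (m'.choose j : ℝ) *
              (Nat.doubleFactorial (i + j - 1) : ℝ) /
                (Nat.doubleFactorial (i + j) : ℝ) := by
  set f : ℝ → ℝ := fun x => Real.sin x ^ (2 * n') * Real.cos x ^ (2 * m') with hf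
  have hfc : Continuous f := by fun_prop
  -- symmetry step
  have hsym : (∫ x in (0:ℝ)..π, (π - x) * f x) = ∫ x in (0:ℝ)..π, x * f x := by
    have := intervalIntegral.integral_comp_sub_left (fun x => x * f x) π (a := 0) (b := π)
    simp only [sub_zero, sub_self] at this
    rw [← this]
    congr 1; ext x
    have hs : Real.sin (π - x) = Real.sin x := Real.sin_pi_sub x
    have hc : Real.cos (π - x) ^ (2 * m') = Real.cos x ^ (2 * m') := by
      rw [Real.cos_pi_sub, neg_pow, pow_mul, neg_one_sq, one_pow, one_mul]
    simp only [hf, hs, hc]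
  have hred : (∫ x in (0:ℝ)..π, (π - x) * f x) = π / 2 * ∫ x in (0:ℝ)..π, f x := by
    have hI1 : IntervalIntegrable (fun x => (π - x) * f x) MeasureTheory.volume 0 π :=
      (Continuous.mul (by fun_prop) hfc).intervalIntegrable _ _
    have hI2 : IntervalIntegrable (fun x => x * f x) MeasureTheory.volume 0 π :=
      (Continuous.mul continuous_id hfc).intervalIntegrable _ _
    have hsum : (∫ x in (0:ℝ)..π, (π - x) * f x) + (∫ x in (0:ℝ)..π, x * f x)
        = π * ∫ x in (0:ℝ)..π, f x := by
      rw [← intervalIntegral.integral_add hI1 hI2, ← intervalIntegral.integral_const_mul]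
      congr 1; ext x; ring
    rw [hsym] at hsum ⊢
    linarith [hsum]
  -- pointwise expansion
  have hexp : ∀ x : ℝ, f x = ∑ i ∈ Finset.range (n' + 1), ∑ j ∈ Finset.range (m' + 1),
      ((-1:ℝ)^i * (n'.choose i : ℝ) * (m'.choose j : ℝ) * (1/2:ℝ)^(n'+m'))
        * Real.cos (2*x) ^ (i + j) := by
    intro x
    have hs2 : Real.sin x ^ (2 * n') = ((-(Real.cos (2*x) * (1/2))) + (1/2:ℝ)) ^ n' := by
      rw [pow_mul, Real.sin_sq_eq_half_sub]
      congr 1; ring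
    have hc2 : Real.cos x ^ (2 * m') = ((Real.cos (2*x) * (1/2)) + (1/2:ℝ)) ^ m' := by
      rw [pow_mul, Real.cos_sq]
      congr 1; ring
    rw [hf]
    simp only [hs2, hc2, add_pow]
    rw [Finset.sum_mul_sum]
    apply Finset.sum_congr rfl
    intro i hi
    apply Finset.sum_congr rfl
    intro j hj
    have hi' : i ≤ n' := Nat.lt_succ_iff.mp (Finset.mem_range.mp hi)
    have hj' : j ≤ m' := Nat.lt_succ_iff.mp (Finset.mem_range.mp hj)
    have h1 : (-(Real.cos (2*x) * (1/2)))^i = (-1:ℝ)^i * Real.cos (2*x)^i * (1/2:ℝ)^i := by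
      rw [neg_pow, mul_pow]; ring
    have h2 : (Real.cos (2*x) * (1/2))^j = Real.cos (2*x)^j * (1/2:ℝ)^j := mul_pow _ _ _
    rw [h1, h2]
    have hpow : (1/2:ℝ)^i * (1/2:ℝ)^(n'-i) * ((1/2:ℝ)^j * (1/2:ℝ)^(m'-j)) = (1/2:ℝ)^(n'+m') := by
      rw [← pow_add, ← pow_add, ← pow_add]
      congr 1
      omega
    rw [pow_add (Real.cos (2*x)) i j, ← hpow]
    ring
  -- integrate term by term
  have hint : (∫ x in (0:ℝ)..π, f x)
      = ∑ i ∈ Finset.range (n' + 1), ∑ j ∈ Finset.range (m' + 1),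
          ((-1:ℝ)^i * (n'.choose i : ℝ) * (m'.choose j : ℝ) * (1/2:ℝ)^(n'+m'))
            * ((if Even (i + j) then (1 : ℝ) else 0) * π *
                ((i + j - 1).doubleFactorial : ℝ) / ((i + j).doubleFactorial : ℝ)) := by
    rw [intervalIntegral.integral_congr (g := fun x =>
      ∑ i ∈ Finset.range (n' + 1), ∑ j ∈ Finset.range (m' + 1),
        ((-1:ℝ)^i * (n'.choose i : ℝ) * (m'.choose j : ℝ) * (1/2:ℝ)^(n'+m'))
          * Real.cos (2*x) ^ (i + j)) (fun x _ => hexp x)]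
    rw [intervalIntegral.integral_finset_sum]
    · apply Finset.sum_congr rfl
      intro i _
      rw [intervalIntegral.integral_finset_sum]
      · apply Finset.sum_congr rfl
        intro j _
        rw [intervalIntegral.integral_const_mul, integral_cos_two_mul_pow]
      · intro j _
        exact (Continuous.mul continuous_const (by fun_prop)).intervalIntegrable _ _
    · intro i _
      exact (continuous_finset_sum _ fun j _ =>
        (Continuous.mul continuous_const (by fun_prop))).intervalIntegrable _ _
  have hassoc : (∫ x in (0:ℝ)..π, (π - x) * Real.sin x ^ (2*n') * Real.cos x ^ (2*m'))
      = ∫ x in (0:ℝ)..π, (π - x) * f x := by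
    congr 1; ext x; rw [hf]; ring
  rw [hassoc, hred, hint, Finset.mul_sum, Finset.mul_sum]
  apply Finset.sum_congr rfl
  intro i _
  rw [Finset.mul_sum, Finset.mul_sum]
  apply Finset.sum_congr rfl
  intro j _
  have h2p : (2:ℝ)^(-(n' + m' : ℤ)) = (1/2:ℝ)^(n'+m') := by
    have hc : (-(n' + m' : ℤ)) = -(((n' + m' : ℕ) : ℤ)) := by push_cast; ring
    rw [hc, zpow_neg, zpow_natCast, one_div, inv_pow]
  rw [h2p]
  ring
end

section
/- Let α > 0 be a real number and let n ≥ 2 be an even natural number. Then ∫_0^1 t · f^{(n)}(t) dt = (−1)^{n/2 − 1} · Γ(n + α + 1/2) · Γ(n − 1) / ( Γ(n/2) · Γ(n/2 + α + 3/2) ), where f^{(n)} denotes the n-th derivative of the function f(t) = (1 − t²)^{n + α − 1/2}. -/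
open Real Set Filter MeasureTheory Polynomial intervalIntegral
open scoped Topology

namespace IntegralMulIteratedDerivAux

noncomputable def ff (s : ℝ) : ℝ → ℝ := fun t => (1 - t ^ 2) ^ s

lemma base_pos {t : ℝ} (ht : t ∈ Set.Ioo (-1 : ℝ) 1) : 0 < 1 - t ^ 2 := by
  rcases ht with ⟨h1, h2⟩; nlinarith

lemma contDiffOn_ff (s : ℝ) (N : ℕ) : ContDiffOn ℝ N (ff s) (Set.Ioo (-1 : ℝ) 1) := by
  intro t ht
  have h : ContDiffAt ℝ N (fun x : ℝ => x ^ s) (1 - t ^ 2) :=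
    Real.contDiffAt_rpow_const_of_ne (base_pos ht).ne'
  exact (h.comp t ((contDiff_const.sub (contDiff_id.pow 2)).contDiffAt)).contDiffWithinAt

lemma iteratedDeriv_eqOn (s : ℝ) (k : ℕ) :
    Set.EqOn (iteratedDerivWithin k (ff s) (Set.Ioo (-1:ℝ) 1)) (iteratedDeriv k (ff s))
      (Set.Ioo (-1:ℝ) 1) := by
  intro x hx
  rw [iteratedDerivWithin_eq_iteratedFDerivWithin, iteratedDeriv_eq_iteratedFDeriv,
    iteratedFDerivWithin_of_isOpen k isOpen_Ioo hx]

lemma hasDerivAt_iteratedDeriv (s : ℝ) (k : ℕ) {t : ℝ} (ht : t ∈ Set.Ioo (-1:ℝ) 1) :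
    HasDerivAt (iteratedDeriv k (ff s)) (iteratedDeriv (k + 1) (ff s) t) t := by
  have hopen : IsOpen (Set.Ioo (-1:ℝ) 1) := isOpen_Ioo
  have hdiff : DifferentiableOn ℝ (iteratedDerivWithin k (ff s) (Set.Ioo (-1:ℝ) 1))
      (Set.Ioo (-1:ℝ) 1) :=
    (contDiffOn_ff s (k+1)).differentiableOn_iteratedDerivWithin
      (by exact_mod_cast Nat.lt_succ_self k) hopen.uniqueDiffOn
  have h1 : DifferentiableAt ℝ (iteratedDerivWithin k (ff s) (Set.Ioo (-1:ℝ) 1)) t :=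
    (hdiff t ht).differentiableAt (hopen.mem_nhds ht)
  have heq : iteratedDerivWithin k (ff s) (Set.Ioo (-1:ℝ) 1) =ᶠ[𝓝 t] iteratedDeriv k (ff s) :=
    Filter.eventuallyEq_of_mem (hopen.mem_nhds ht) (iteratedDeriv_eqOn s k)
  have hd : DifferentiableAt ℝ (iteratedDeriv k (ff s)) t := h1.congr_of_eventuallyEq heq.symm
  rw [iteratedDeriv_succ]
  exact hd.hasDerivAt

lemma hasDerivAt_base (t : ℝ) : HasDerivAt (fun x : ℝ => 1 - x ^ 2) (-(2 * t)) t := by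
  simpa using ((hasDerivAt_pow 2 t).const_sub 1)

lemma exists_poly (s : ℝ) (k : ℕ) :
    ∃ p : Polynomial ℝ, ∀ t ∈ Set.Ioo (-1:ℝ) 1,
      iteratedDeriv k (ff s) t = p.eval t * (1 - t ^ 2) ^ (s - k) := by
  induction k with
  | zero => exact ⟨1, fun t ht => by simp [ff]⟩
  | succ k ih =>
    obtain ⟨p, hp⟩ := ih
    refine ⟨(1 - Polynomial.X ^ 2) * Polynomial.derivative p
      - Polynomial.C (2 * (s - k)) * (Polynomial.X * p), fun t ht => ?_⟩
    have hb := base_pos ht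
    have he : HasDerivAt (fun t : ℝ => p.eval t * (1 - t ^ 2) ^ (s - k))
        (Polynomial.eval t (Polynomial.derivative p) * (1 - t ^ 2) ^ (s - k)
          + p.eval t * (-(2 * t) * (s - k) * (1 - t ^ 2) ^ (s - k - 1))) t :=
      (p.hasDerivAt t).mul ((hasDerivAt_base t).rpow_const (Or.inl hb.ne'))
    have hEq : deriv (iteratedDeriv k (ff s)) t
        = deriv (fun t : ℝ => p.eval t * (1 - t ^ 2) ^ (s - k)) t := by
      apply Filter.EventuallyEq.deriv_eq
      exact Filter.eventuallyEq_of_mem (isOpen_Ioo.mem_nhds ht) (fun x hx => hp x hx)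
    have hpow : (1 - t ^ 2) ^ (s - k) = (1 - t ^ 2) ^ (s - k - 1) * (1 - t ^ 2) := by
      rw [← Real.rpow_add_one hb.ne' (s - k - 1)]
      norm_num
    have hcast : s - ((k : ℕ) + 1 : ℕ) = s - k - 1 := by push_cast; ring
    rw [iteratedDeriv_succ, hEq, he.deriv, hcast, hpow]
    simp only [Polynomial.eval_sub, Polynomial.eval_mul, Polynomial.eval_one, Polynomial.eval_pow,
      Polynomial.eval_X, Polynomial.eval_C, Polynomial.eval_sub]
    ring

lemma ode (s : ℝ) (k : ℕ) {t : ℝ} (ht : t ∈ Set.Ioo (-1:ℝ) 1) :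
    (1 - t ^ 2) * iteratedDeriv (k + 1) (ff s) t
      + (2 * s - 2 * k) * t * iteratedDeriv k (ff s) t
      + (2 * s * k - k * (k - 1)) * iteratedDeriv (k - 1) (ff s) t = 0 := by
  induction k generalizing t ht with
  | zero =>
    have hb := base_pos ht
    have he : HasDerivAt (ff s) (-(2*t) * s * (1 - t^2) ^ (s-1)) t :=
      (hasDerivAt_base t).rpow_const (Or.inl hb.ne')
    have h0 : iteratedDeriv 1 (ff s) t = -(2*t) * s * (1 - t^2)^(s-1) := by
      rw [iteratedDeriv_one]; exact he.deriv
    have hpow : (1 - t ^ 2) ^ s = (1 - t ^ 2) ^ (s - 1) * (1 - t ^ 2) := by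
      rw [← Real.rpow_add_one hb.ne' (s - 1)]; norm_num
    have h00 : iteratedDeriv 0 (ff s) t = (1 - t ^ 2) ^ s := by
      rw [iteratedDeriv_zero]; rfl
    rw [zero_add, h0]
    simp only [Nat.zero_sub, Nat.cast_zero, h00]
    rw [hpow]
    ring
  | succ k ih =>
    have hb := base_pos ht
    set D := fun j => iteratedDeriv j (ff s) with hD
    have hzero : ∀ x ∈ Set.Ioo (-1:ℝ) 1,
        (fun x => (1 - x ^ 2) * D (k + 1) x + (2 * s - 2 * k) * x * D k x
          + (2 * s * k - k * (k - 1)) * D (k - 1) x) x = 0 := fun x hx => ih hx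
    have hd1 := hasDerivAt_iteratedDeriv s (k+1) ht
    have hd0 := hasDerivAt_iteratedDeriv s k ht
    have hdm := hasDerivAt_iteratedDeriv s (k-1) ht
    have hG' : HasDerivAt (fun x => (1 - x ^ 2) * D (k + 1) x + (2 * s - 2 * k) * x * D k x
          + (2 * s * k - k * (k - 1)) * D (k - 1) x)
        ((-(2*t)) * D (k+1) t + (1 - t^2) * D (k+2) t
          + ((2 * s - 2 * k) * 1 * D k t + (2 * s - 2 * k) * t * D (k+1) t)
          + (2 * s * k - k * (k - 1)) * D (k - 1 + 1) t) t := by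
      have h1 := (hasDerivAt_base t).mul hd1
      have h2 := (((hasDerivAt_id t).const_mul (2 * s - 2 * (k:ℝ))).mul hd0)
      have h3 := hdm.const_mul (2 * s * (k:ℝ) - k * ((k:ℝ) - 1))
      exact (h1.add h2).add h3
    have hderiv0 : deriv (fun x => (1 - x ^ 2) * D (k + 1) x + (2 * s - 2 * k) * x * D k x
          + (2 * s * k - k * (k - 1)) * D (k - 1) x) t = 0 := by
      have h := Filter.eventuallyEq_of_mem (isOpen_Ioo.mem_nhds ht) hzero
      rw [h.deriv_eq]; exact deriv_const t 0
    have key : (-(2*t)) * D (k+1) t + (1 - t^2) * D (k+2) t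
          + ((2 * s - 2 * k) * 1 * D k t + (2 * s - 2 * k) * t * D (k+1) t)
          + (2 * s * k - k * (k - 1)) * D (k - 1 + 1) t = 0 := by
      rw [← hG'.deriv]; exact hderiv0
    rcases Nat.eq_zero_or_pos k with rfl | hk
    · simp only [Nat.cast_zero] at key ⊢
      push_cast
      linear_combination key
    · have hk1 : k - 1 + 1 = k := Nat.succ_pred_eq_of_pos hk
      rw [hk1] at key
      have hsub : (k + 1 : ℕ) - 1 = k := rfl
      rw [hsub]
      push_cast
      linear_combination key

lemma rec_zero (s : ℝ) (k : ℕ) :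
    iteratedDeriv (k + 2) (ff s) 0
      = ((k : ℝ) + 1) * ((k : ℝ) - 2 * s) * iteratedDeriv k (ff s) 0 := by
  have h0 : (0:ℝ) ∈ Set.Ioo (-1:ℝ) 1 := by norm_num
  have h := ode s (k + 1) h0
  have hsub : (k + 1 : ℕ) - 1 = k := rfl
  rw [hsub] at h
  push_cast at h
  nlinarith [h]

lemma value_at_zero (s : ℝ) (m : ℕ) (hm : (m : ℝ) < s) :
    iteratedDeriv (2 * m) (ff s) 0
      = (-1) ^ m * (Nat.factorial (2 * m)) / (Nat.factorial m)
        * (Real.Gamma (s + 1) / Real.Gamma (s - m + 1)) := by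
  induction m with
  | zero =>
    have hΓ : Real.Gamma (s + 1) ≠ 0 := (Real.Gamma_pos_of_pos (by linarith)).ne'
    simp only [Nat.mul_zero, Nat.cast_zero, sub_zero, iteratedDeriv_zero, pow_zero,
      Nat.factorial_zero, Nat.cast_one, mul_zero]
    have : ff s 0 = 1 := by simp [ff]
    rw [this, div_self hΓ]
    norm_num
  | succ m ih =>
    have hm' : (m : ℝ) < s := by push_cast at hm ⊢; linarith
    have hIH := ih hm'
    have hrec := rec_zero s (2 * m)
    have hidx : 2 * (m + 1) = 2 * m + 2 := by ring
    rw [hidx, hrec, hIH]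
    have hsm : s - m - 1 > 0 := by push_cast at hm; linarith
    have hΓrec : Real.Gamma (s - m + 1) = (s - m) * Real.Gamma (s - m) := by
      rw [Real.Gamma_add_one (by linarith)]
    have hcast : s - ((m : ℝ) + 1) + 1 = s - m := by ring
    rw [show ((m : ℕ) + 1 : ℕ) = m + 1 from rfl]
    push_cast
    rw [hcast, hΓrec]
    have hf1 : Nat.factorial (2 * m + 2) = (2*m+2) * ((2*m+1) * Nat.factorial (2*m)) := by
      rw [show 2*m+2 = (2*m+1)+1 from rfl, Nat.factorial_succ, Nat.factorial_succ]
    have hf2 : Nat.factorial (m + 1) = (m+1) * Nat.factorial m := Nat.factorial_succ m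
    rw [hf1, hf2]
    have hΓne : Real.Gamma (s - m) ≠ 0 := (Real.Gamma_pos_of_pos (by linarith)).ne'
    have hfm : (Nat.factorial m : ℝ) ≠ 0 := by exact_mod_cast (Nat.factorial_pos m).ne'
    have hsm' : s - (m:ℝ) ≠ 0 := by linarith
    have hm1 : ((m:ℝ) + 1) ≠ 0 := by positivity
    push_cast
    field_simp
    ring


lemma integrable_main (α : ℝ) (hα : 0 < α) (n : ℕ) :
    IntervalIntegrable (fun t => t * iteratedDeriv n (ff ((n:ℝ) + α - 1/2)) t) volume 0 1 := by
  set s := (n:ℝ) + α - 1/2 with hs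
  obtain ⟨p, hp⟩ := exists_poly s n
  have e : s - (n:ℝ) = α - 1/2 := by rw [hs]; ring
  have h2 : IntervalIntegrable (fun t : ℝ => (1 - t) ^ (α - 1/2)) volume 0 1 := by
    have h := (intervalIntegrable_rpow' (a := 0) (b := 1)
      (by linarith : (-1:ℝ) < α - 1/2)).comp_sub_left 1
    simpa using h.symm
  have h1 : ContinuousOn (fun t : ℝ => t * p.eval t * (1 + t) ^ (α - 1/2))
      (Set.uIcc (0:ℝ) 1) := by
    apply (continuousOn_id.mul p.continuous.continuousOn).mul
    apply ContinuousOn.rpow_const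
    · exact (continuous_const.add continuous_id).continuousOn
    · intro x hx
      left
      rw [Set.uIcc_of_le (by norm_num : (0:ℝ) ≤ 1)] at hx
      have h0x : (0:ℝ) ≤ x := hx.1
      positivity
  have hg : IntervalIntegrable
      (fun t : ℝ => (t * p.eval t * (1 + t) ^ (α - 1/2)) * (1 - t) ^ (α - 1/2)) volume 0 1 :=
    h2.continuousOn_mul h1
  rw [intervalIntegrable_iff] at hg ⊢
  apply hg.congr
  have hsing : {a : ℝ | ¬ a ≠ 1} = {1} := by ext a; simp
  have h2' : ∀ᵐ t ∂(volume.restrict (Set.uIoc (0:ℝ) 1)), t ≠ 1 :=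
    ae_restrict_of_ae (by rw [ae_iff, hsing]; exact Real.volume_singleton)
  filter_upwards [ae_restrict_mem measurableSet_uIoc, h2'] with t htm hne
  rw [Set.uIoc_of_le (by norm_num : (0:ℝ) ≤ 1)] at htm
  have htU : t ∈ Set.Ioo (-1:ℝ) 1 := ⟨by linarith [htm.1], lt_of_le_of_ne htm.2 hne⟩
  rw [hp t htU, e]
  have hpos1 : (0:ℝ) ≤ 1 + t := by linarith [htm.1]
  have hpos2 : (0:ℝ) ≤ 1 - t := by linarith [htU.2]
  rw [show (1:ℝ) - t^2 = (1 + t) * (1 - t) from by ring, Real.mul_rpow hpos1 hpos2]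
  ring

lemma tendsto_D_zero (s : ℝ) (k : ℕ) (hk : 0 < s - k) :
    Filter.Tendsto (iteratedDeriv k (ff s)) (𝓝[Set.Ioo (0:ℝ) 1] 1) (𝓝 0) := by
  obtain ⟨p, hp⟩ := exists_poly s k
  have h1 : Filter.Tendsto (fun t : ℝ => 1 - t ^ 2) (𝓝[Set.Ioo (0:ℝ) 1] 1) (𝓝 0) := by
    have hc : Continuous (fun t : ℝ => 1 - t ^ 2) := by continuity
    have h : Filter.Tendsto (fun t : ℝ => 1 - t ^ 2) (𝓝[Set.Ioo (0:ℝ) 1] 1)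
        (𝓝 (1 - 1 ^ 2)) := (hc.tendsto 1).mono_left nhdsWithin_le_nhds
    rwa [show (1:ℝ) - 1 ^ 2 = 0 from by norm_num] at h
  have h2 : Filter.Tendsto (fun x : ℝ => x ^ (s - k)) (𝓝 0) (𝓝 0) := by
    have hc := Real.continuousAt_rpow_const 0 (s - k) (Or.inr hk.le)
    have h := hc.tendsto
    rwa [Real.zero_rpow hk.ne'] at h
  have h3 := h2.comp h1
  have h4 : Filter.Tendsto (fun t : ℝ => p.eval t * (1 - t ^ 2) ^ (s - k))
      (𝓝[Set.Ioo (0:ℝ) 1] 1) (𝓝 (p.eval 1 * 0)) :=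
    ((p.continuous.tendsto 1).mono_left nhdsWithin_le_nhds).mul h3
  rw [mul_zero] at h4
  apply Filter.Tendsto.congr' _ h4
  filter_upwards [self_mem_nhdsWithin] with t ht
  exact (hp t ⟨by linarith [ht.1], ht.2⟩).symm

end IntegralMulIteratedDerivAux

open IntegralMulIteratedDerivAux

/-- For real `α > 0` and even `n ≥ 2`, with `f(t) = (1 − t²)^{n + α − 1/2}`,
`∫_0^1 t · f⁽ⁿ⁾(t) dt = (−1)^{n/2−1} Γ(n+α+1/2) Γ(n−1) / (Γ(n/2) Γ(n/2+α+3/2))`. -/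
theorem integral_mul_iteratedDeriv_even (α : ℝ) (hα : 0 < α) (n : ℕ) (hn : 2 ≤ n)
    (hne : Even n) :
    ∫ t in (0:ℝ)..1,
        t * iteratedDeriv n (fun t : ℝ => (1 - t ^ 2) ^ ((n : ℝ) + α - 1 / 2)) t =
      (-1 : ℝ) ^ (n / 2 - 1) * Real.Gamma ((n : ℝ) + α + 1 / 2) * Real.Gamma ((n : ℝ) - 1) /
        (Real.Gamma ((n : ℝ) / 2) * Real.Gamma ((n : ℝ) / 2 + α + 3 / 2)) := by
  have h01 : (0:ℝ) ≤ 1 := by norm_num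
  rw [show (fun t : ℝ => (1 - t ^ 2) ^ ((n : ℝ) + α - 1 / 2)) = ff ((n:ℝ) + α - 1/2) from rfl]
  set s := (n:ℝ) + α - 1/2 with hs
  have hInt := integrable_main α hα n
  rw [← hs] at hInt
  have hIcc : IntegrableOn (fun t => t * iteratedDeriv n (ff s) t) (Set.uIcc (0:ℝ) 1) volume := by
    rw [Set.uIcc_of_le h01]
    exact (intervalIntegrable_iff_integrableOn_Icc_of_le h01).mp hInt
  have hprim := intervalIntegral.continuousOn_primitive_interval hIcc
  haveI hne1 : (𝓝[Set.Ioo (0:ℝ) 1] (1:ℝ)).NeBot := by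
    apply mem_closure_iff_nhdsWithin_neBot.mp
    rw [closure_Ioo (by norm_num : (0:ℝ) ≠ 1)]
    exact Set.right_mem_Icc.mpr h01
  have ht1 : Filter.Tendsto (fun b => ∫ t in (0:ℝ)..b, t * iteratedDeriv n (ff s) t)
      (𝓝[Set.Ioo (0:ℝ) 1] 1) (𝓝 (∫ t in (0:ℝ)..1, t * iteratedDeriv n (ff s) t)) := by
    have h := hprim 1 (by rw [Set.uIcc_of_le h01]; exact Set.right_mem_Icc.mpr h01)
    apply h.tendsto.mono_left
    apply nhdsWithin_mono
    rw [Set.uIcc_of_le h01]; exact Set.Ioo_subset_Icc_self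
  have e1 : n - 1 + 1 = n := by omega
  have e2 : n - 2 + 1 = n - 1 := by omega
  have hFTC : ∀ b ∈ Set.Ioo (0:ℝ) 1,
      ∫ t in (0:ℝ)..b, t * iteratedDeriv n (ff s) t
        = (b * iteratedDeriv (n-1) (ff s) b - iteratedDeriv (n-2) (ff s) b)
          - (0 * iteratedDeriv (n-1) (ff s) 0 - iteratedDeriv (n-2) (ff s) 0) := by
    intro b hb
    apply intervalIntegral.integral_eq_sub_of_hasDerivAt
    · intro x hx
      rw [Set.uIcc_of_le hb.1.le] at hx
      have hxU : x ∈ Set.Ioo (-1:ℝ) 1 := ⟨by linarith [hx.1], lt_of_le_of_lt hx.2 hb.2⟩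
      have h1 : HasDerivAt (iteratedDeriv (n-1) (ff s)) (iteratedDeriv n (ff s) x) x := by
        have h := hasDerivAt_iteratedDeriv s (n-1) hxU; rwa [e1] at h
      have h2 : HasDerivAt (iteratedDeriv (n-2) (ff s)) (iteratedDeriv (n-1) (ff s) x) x := by
        have h := hasDerivAt_iteratedDeriv s (n-2) hxU; rwa [e2] at h
      have h3 := ((hasDerivAt_id x).mul h1).sub h2
      refine h3.congr_deriv ?_
      simp only [id_eq]
      ring
    · apply hInt.mono_set
      apply Set.uIcc_subset_uIcc Set.left_mem_uIcc
      rw [Set.uIcc_of_le h01]; exact ⟨hb.1.le, hb.2.le⟩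
  have hb1 : Filter.Tendsto (iteratedDeriv (n-1) (ff s)) (𝓝[Set.Ioo (0:ℝ) 1] 1) (𝓝 0) := by
    apply tendsto_D_zero
    have hc : ((n-1 : ℕ) : ℝ) = (n:ℝ) - 1 := by
      have := Nat.cast_sub (show 1 ≤ n by omega) (R := ℝ); push_cast at this ⊢; linarith
    rw [hc, hs]; linarith
  have hb2 : Filter.Tendsto (iteratedDeriv (n-2) (ff s)) (𝓝[Set.Ioo (0:ℝ) 1] 1) (𝓝 0) := by
    apply tendsto_D_zero
    have hc : ((n-2 : ℕ) : ℝ) = (n:ℝ) - 2 := by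
      have := Nat.cast_sub (show 2 ≤ n by omega) (R := ℝ); push_cast at this ⊢; linarith
    rw [hc, hs]; linarith
  have hid : Filter.Tendsto (fun b : ℝ => b) (𝓝[Set.Ioo (0:ℝ) 1] 1) (𝓝 1) :=
    Filter.tendsto_id.mono_right nhdsWithin_le_nhds
  have ht2 : Filter.Tendsto (fun b =>
        (b * iteratedDeriv (n-1) (ff s) b - iteratedDeriv (n-2) (ff s) b)
          - (0 * iteratedDeriv (n-1) (ff s) 0 - iteratedDeriv (n-2) (ff s) 0))
      (𝓝[Set.Ioo (0:ℝ) 1] 1) (𝓝 (iteratedDeriv (n-2) (ff s) 0)) := by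
    have h := ((hid.mul hb1).sub hb2).sub_const
      (0 * iteratedDeriv (n-1) (ff s) 0 - iteratedDeriv (n-2) (ff s) 0)
    have hval : 1 * 0 - 0 - (0 * iteratedDeriv (n-1) (ff s) 0 - iteratedDeriv (n-2) (ff s) 0)
        = iteratedDeriv (n-2) (ff s) 0 := by ring
    rwa [hval] at h
  have ht2' : Filter.Tendsto (fun b => ∫ t in (0:ℝ)..b, t * iteratedDeriv n (ff s) t)
      (𝓝[Set.Ioo (0:ℝ) 1] 1) (𝓝 (iteratedDeriv (n-2) (ff s) 0)) := by
    apply Filter.Tendsto.congr' _ ht2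
    filter_upwards [self_mem_nhdsWithin] with b hb
    exact (hFTC b hb).symm
  have hlim := tendsto_nhds_unique ht1 ht2'
  rw [hlim]
  obtain ⟨l, hl⟩ := hne
  have hnm : n = 2 * (l - 1) + 2 := by omega
  set m := l - 1 with hm
  have hn2 : n - 2 = 2 * m := by omega
  have hmlt : (m:ℝ) < s := by
    have hc : (m:ℝ) + 2 ≤ (n:ℝ) := by exact_mod_cast (show m + 2 ≤ n by omega)
    rw [hs]; linarith
  rw [hn2, value_at_zero s m hmlt]
  have g1 : Real.Gamma ((n:ℝ) - 1) = Nat.factorial (2*m) := by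
    have hc : (n:ℝ) - 1 = ((2*m : ℕ) : ℝ) + 1 := by rw [hnm]; push_cast; ring
    rw [hc, Real.Gamma_nat_eq_factorial]
  have g2 : Real.Gamma ((n:ℝ)/2) = Nat.factorial m := by
    have hc : (n:ℝ)/2 = ((m : ℕ) : ℝ) + 1 := by rw [hnm]; push_cast; ring
    rw [hc, Real.Gamma_nat_eq_factorial]
  have g3 : (n:ℝ) + α + 1/2 = s + 1 := by rw [hs]; ring
  have g4 : (n:ℝ)/2 + α + 3/2 = s - m + 1 := by rw [hs, hnm]; push_cast; ring
  rw [g1, g2, g3, g4]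
  have hdiv : n / 2 - 1 = m := by omega
  rw [hdiv]
  have hΓ : Real.Gamma (s - m + 1) ≠ 0 := by
    apply (Real.Gamma_pos_of_pos ?_).ne'
    linarith
  have hfm : (Nat.factorial m : ℝ) ≠ 0 := by exact_mod_cast (Nat.factorial_pos m).ne'
  field_simp
end

section
/- Let α > 0 be a real number and let n ≥ 3 be an odd natural number. Then ∫_0^1 t · f^{(n)}(t) dt = 0, where f^{(n)} denotes the n-th derivative of the function f(t) = (1 − t²)^{n + α − 1/2}. -/
open Real Polynomial Set MeasureTheory

private lemma rpow_split (x c : ℝ) (h : x ≠ 0 ∨ 1 ≤ c) : x ^ c = x ^ (c - 1) * x := by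
  rcases eq_or_ne x 0 with hx | hx
  · subst hx
    have hc : c ≠ 0 := by
      rcases h with h | h
      · exact absurd rfl h
      · intro h0; rw [h0] at h; linarith
    rw [Real.zero_rpow hc, mul_zero]
  · nth_rewrite 1 [show c = (c - 1) + 1 by ring]
    rw [Real.rpow_add_one hx]

private lemma hasDerivAt_poly_rpow (p : Polynomial ℝ) (c t : ℝ) (h : 1 - t ^ 2 ≠ 0 ∨ 1 ≤ c) :
    HasDerivAt (fun t : ℝ => p.eval t * (1 - t ^ 2) ^ c)
      ((p.derivative.eval t * (1 - t ^ 2) - 2 * c * t * p.eval t) * (1 - t ^ 2) ^ (c - 1)) t := by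
  have h1 : HasDerivAt (fun t : ℝ => 1 - t ^ 2) (-(2 * t)) t := by
    simpa using ((hasDerivAt_pow 2 t).const_sub 1)
  have h2 : HasDerivAt (fun t : ℝ => (1 - t ^ 2) ^ c)
      (c * (1 - t ^ 2) ^ (c - 1) * (-(2 * t))) t :=
    by have := (Real.hasDerivAt_rpow_const (x := 1 - t ^ 2) (p := c) h).comp t h1; exact this
  have h3 : HasDerivAt (fun t : ℝ => p.eval t * (1 - t ^ 2) ^ c) _ t := (p.hasDerivAt t).mul h2
  convert h3 using 1
  rw [rpow_split (1 - t ^ 2) c h]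
  ring

/-- For real `α > 0` and odd `n ≥ 3`, with `f(t) = (1 − t²)^{n + α − 1/2}`,
`∫_0^1 t · f⁽ⁿ⁾(t) dt = 0`. -/
theorem integral_mul_iteratedDeriv_odd (α : ℝ) (hα : 0 < α) (n : ℕ) (hn : 3 ≤ n)
    (hno : Odd n) :
    ∫ t in (0:ℝ)..1,
        t * iteratedDeriv n (fun t : ℝ => (1 - t ^ 2) ^ ((n : ℝ) + α - 1 / 2)) t = 0 := by
  obtain ⟨β, hβ⟩ : ∃ β : ℝ, (n : ℝ) + α - 1 / 2 = β := ⟨_, rfl⟩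
  rw [hβ]
  set f : ℝ → ℝ := fun t : ℝ => (1 - t ^ 2) ^ β with hf
  have hn3 : (3:ℝ) ≤ (n:ℝ) := by exact_mod_cast hn
  -- structure of iterated derivatives
  have key : ∀ k : ℕ, (k : ℝ) + 1 ≤ β + 1/2 →
      ∃ p : Polynomial ℝ, iteratedDeriv k f = fun t => p.eval t * (1 - t ^ 2) ^ (β - k) := by
    intro k hk
    induction k with
    | zero => exact ⟨1, by simp [hf]⟩
    | succ k ih =>
      obtain ⟨p, hp⟩ := ih (by push_cast at hk ⊢; linarith)
      have hc : 1 ≤ β - (k:ℝ) := by push_cast at hk; linarith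
      refine ⟨Polynomial.derivative p * (1 - Polynomial.X ^ 2)
        - Polynomial.C (2 * (β - (k:ℝ))) * Polynomial.X * p, ?_⟩
      funext t
      rw [iteratedDeriv_succ, hp,
        (hasDerivAt_poly_rpow p (β - (k:ℝ)) t (Or.inr hc)).deriv]
      rw [show β - ((k:ℕ) + 1 : ℕ) = β - (k:ℝ) - 1 by push_cast; ring]
      simp only [Polynomial.eval_sub, Polynomial.eval_mul, Polynomial.eval_one,
        Polynomial.eval_pow, Polynomial.eval_X, Polynomial.eval_C]
      try ring
  have h1n : n - 1 + 1 = n := by omega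
  have h2n : n - 2 + 1 = n - 1 := by omega
  have c1 : ((n - 1 : ℕ) : ℝ) = (n : ℝ) - 1 := by
    rw [Nat.cast_sub (by omega)]; norm_num
  have c2 : ((n - 2 : ℕ) : ℝ) = (n : ℝ) - 2 := by
    rw [Nat.cast_sub (by omega)]; norm_num
  obtain ⟨P₁, hP₁⟩ := key (n - 1) (by rw [c1]; linarith)
  obtain ⟨P₂, hP₂⟩ := key (n - 2) (by rw [c2]; linarith)
  have he₁ : β - ((n - 1 : ℕ) : ℝ) = α + 1/2 := by rw [c1, ← hβ]; ring
  have he₂ : β - ((n - 2 : ℕ) : ℝ) = α + 3/2 := by rw [c2, ← hβ]; ring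
  -- vanishing at 1
  have hv1 : iteratedDeriv (n - 1) f 1 = 0 := by
    rw [hP₁]
    simp only
    rw [show (1:ℝ) - 1 ^ 2 = 0 by norm_num, he₁, Real.zero_rpow (by linarith), mul_zero]
  have hv2 : iteratedDeriv (n - 2) f 1 = 0 := by
    rw [hP₂]
    simp only
    rw [show (1:ℝ) - 1 ^ 2 = 0 by norm_num, he₂, Real.zero_rpow (by linarith), mul_zero]
  -- vanishing at 0 by oddness
  have hneg : (fun x : ℝ => f (-x)) = f := by
    funext x; simp only [hf, neg_sq]
  have hodd2 : Odd (n - 2) := Nat.Odd.sub_even (by omega) hno even_two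
  have hzero : iteratedDeriv (n - 2) f 0 = 0 := by
    have h := iteratedDeriv_comp_neg (n - 2) f 0
    rw [hneg, neg_zero, hodd2.neg_one_pow] at h
    simp only [smul_eq_mul, neg_one_mul] at h
    linarith
  -- continuity
  have hcont1 : Continuous (iteratedDeriv (n - 1) f) := by
    rw [hP₁]
    exact P₁.continuous.mul ((continuous_const.sub (continuous_pow 2)).rpow_const
      fun x => Or.inr (by rw [he₁]; linarith))
  have hcont2 : Continuous (iteratedDeriv (n - 2) f) := by
    rw [hP₂]
    exact P₂.continuous.mul ((continuous_const.sub (continuous_pow 2)).rpow_const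
      fun x => Or.inr (by rw [he₂]; linarith))
  -- derivatives at interior points
  have H2 : ∀ t ∈ Ioo (0:ℝ) 1,
      HasDerivAt (iteratedDeriv (n - 2) f) (iteratedDeriv (n - 1) f t) t := by
    intro t ht
    have hd : HasDerivAt (iteratedDeriv (n - 2) f)
        ((P₂.derivative.eval t * (1 - t ^ 2) - 2 * (β - ((n - 2 : ℕ) : ℝ)) * t * P₂.eval t)
          * (1 - t ^ 2) ^ (β - ((n - 2 : ℕ) : ℝ) - 1)) t := by
      rw [hP₂]
      exact hasDerivAt_poly_rpow P₂ _ t (Or.inr (by rw [he₂]; linarith))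
    have hv : iteratedDeriv (n - 1) f t
        = (P₂.derivative.eval t * (1 - t ^ 2) - 2 * (β - ((n - 2 : ℕ) : ℝ)) * t * P₂.eval t)
          * (1 - t ^ 2) ^ (β - ((n - 2 : ℕ) : ℝ) - 1) := by
      rw [← h2n, iteratedDeriv_succ]; exact hd.deriv
    rw [hv]; exact hd
  have H1 : ∀ t ∈ Ioo (0:ℝ) 1,
      HasDerivAt (iteratedDeriv (n - 1) f) (iteratedDeriv n f t) t := by
    intro t ht
    have hpos : 0 < 1 - t ^ 2 := by nlinarith [ht.1, ht.2]
    have hd : HasDerivAt (iteratedDeriv (n - 1) f)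
        ((P₁.derivative.eval t * (1 - t ^ 2) - 2 * (β - ((n - 1 : ℕ) : ℝ)) * t * P₁.eval t)
          * (1 - t ^ 2) ^ (β - ((n - 1 : ℕ) : ℝ) - 1)) t := by
      rw [hP₁]
      exact hasDerivAt_poly_rpow P₁ _ t (Or.inl hpos.ne')
    have hv : iteratedDeriv n f t
        = (P₁.derivative.eval t * (1 - t ^ 2) - 2 * (β - ((n - 1 : ℕ) : ℝ)) * t * P₁.eval t)
          * (1 - t ^ 2) ^ (β - ((n - 1 : ℕ) : ℝ) - 1) := by
      rw [← h1n, iteratedDeriv_succ]; exact hd.deriv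
    rw [hv]; exact hd
  -- integrability of the integrand
  have hbase : IntervalIntegrable (fun x : ℝ => (1 - x) ^ (β - ((n - 1 : ℕ) : ℝ) - 1))
      volume 0 1 := by
    have h := (intervalIntegral.intervalIntegrable_rpow' (a := 1) (b := 0)
      (r := β - ((n - 1 : ℕ) : ℝ) - 1) (by rw [he₁]; linarith)).comp_sub_left 1
    simpa using h
  have hint : IntervalIntegrable (fun t : ℝ => t * iteratedDeriv n f t) volume 0 1 := by
    have hφ : IntervalIntegrable (fun t : ℝ =>
        (t * (P₁.derivative.eval t * (1 - t ^ 2) - 2 * (β - ((n - 1 : ℕ) : ℝ)) * t * P₁.eval t)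
          * (1 + t) ^ (β - ((n - 1 : ℕ) : ℝ) - 1))
        * (1 - t) ^ (β - ((n - 1 : ℕ) : ℝ) - 1)) volume 0 1 := by
      apply hbase.continuousOn_mul
      apply ContinuousOn.mul
      · exact (continuousOn_id.mul ((P₁.derivative.continuous.mul
          (continuous_const.sub (continuous_pow 2))).sub
          ((continuous_const.mul continuous_id).mul P₁.continuous)).continuousOn)
      · apply ContinuousOn.rpow_const (continuous_const.add continuous_id).continuousOn
        intro x hx
        rw [Set.uIcc_of_le (by norm_num : (0:ℝ) ≤ 1)] at hx
        exact Or.inl (by have := hx.1; show (1:ℝ) + x ≠ 0; intro h0; linarith)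
    apply hφ.congr_ae
    have h1 : ∀ᵐ (t : ℝ) ∂(volume : Measure ℝ), t ≠ 1 := by
      refine MeasureTheory.ae_iff.2 ?_
      simp only [ne_eq, not_not, Set.setOf_eq_eq_singleton]
      exact Real.volume_singleton
    filter_upwards [MeasureTheory.ae_restrict_mem measurableSet_uIoc,
      MeasureTheory.ae_restrict_of_ae h1] with t ht ht1
    rw [Set.uIoc_of_le (by norm_num : (0:ℝ) ≤ 1)] at ht
    have ht0 : 0 < t := ht.1
    have htl : t < 1 := lt_of_le_of_ne ht.2 ht1
    have hpos : 0 < 1 - t ^ 2 := by nlinarith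
    have hd : HasDerivAt (iteratedDeriv (n - 1) f)
        ((P₁.derivative.eval t * (1 - t ^ 2) - 2 * (β - ((n - 1 : ℕ) : ℝ)) * t * P₁.eval t)
          * (1 - t ^ 2) ^ (β - ((n - 1 : ℕ) : ℝ) - 1)) t := by
      rw [hP₁]
      exact hasDerivAt_poly_rpow P₁ _ t (Or.inl hpos.ne')
    have hv : iteratedDeriv n f t
        = (P₁.derivative.eval t * (1 - t ^ 2) - 2 * (β - ((n - 1 : ℕ) : ℝ)) * t * P₁.eval t)
          * (1 - t ^ 2) ^ (β - ((n - 1 : ℕ) : ℝ) - 1) := by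
      rw [← h1n, iteratedDeriv_succ]; exact hd.deriv
    rw [hv]
    have hsplit : ((1:ℝ) - t ^ 2) ^ (β - ((n - 1 : ℕ) : ℝ) - 1)
        = (1 - t) ^ (β - ((n - 1 : ℕ) : ℝ) - 1) * (1 + t) ^ (β - ((n - 1 : ℕ) : ℝ) - 1) := by
      rw [show (1:ℝ) - t ^ 2 = (1 - t) * (1 + t) by ring,
        Real.mul_rpow (by linarith) (by linarith)]
    rw [hsplit]
    ring
  -- FTC
  have hG : Continuous (fun t : ℝ => t * iteratedDeriv (n - 1) f t - iteratedDeriv (n - 2) f t) :=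
    (continuous_id.mul hcont1).sub hcont2
  have hFTC := intervalIntegral.integral_eq_sub_of_hasDeriv_right_of_le
    (f := fun t : ℝ => t * iteratedDeriv (n - 1) f t - iteratedDeriv (n - 2) f t)
    (f' := fun t : ℝ => t * iteratedDeriv n f t)
    (by norm_num : (0:ℝ) ≤ 1) hG.continuousOn
    (fun x hx => by
      have hD := ((hasDerivAt_id x).mul (H1 x hx)).sub (H2 x hx)
      simp only [id_eq] at hD
      have heq : 1 * iteratedDeriv (n - 1) f x + x * iteratedDeriv n f x
          - iteratedDeriv (n - 1) f x = x * iteratedDeriv n f x := by ring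
      rw [heq] at hD
      exact hD.hasDerivWithinAt) hint
  rw [hFTC]
  simp [hv1, hv2, hzero]
end

section
/- Let d ≥ 3 be a natural number, set α = (d − 2)/2, and let n ≥ 2 be an even natural number. Then ( Γ(d/2) / ( Γ((d−1)/2) · √π ) ) · ( (−1)^n / 2^n ) · ( Γ(α + 1/2) / Γ(α + n + 1/2) ) · ∫_0^1 t · f^{(n)}(t) dt = Γ(d/2) · (−1)^{n/2 − 1} · Γ(n − 1) / ( √π · 2^n · Γ(n/2) · Γ((n + d + 1)/2) ), where f^{(n)} denotes the n-th derivative of the function f(t) = (1 − t²)^{n + α − 1/2}. -/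
open Real

section AuxReLU
open Polynomial

noncomputable def QP (β : ℝ) : ℕ → Polynomial ℝ
  | 0 => 1
  | (k+1) => C (2*((k:ℝ) - β)) * X * QP β k + (1 - X^2) * derivative (QP β k)

lemma QP_deriv (β : ℝ) (k : ℕ) :
    derivative (QP β (k+1)) = C (((k:ℝ)+1)*((k:ℝ)-2*β)) * QP β k := by
  induction k with
  | zero =>
    rw [QP]
    simp only [QP, derivative_one, mul_zero, zero_mul, add_zero, mul_one,
      derivative_mul, derivative_C, derivative_X, zero_add, Nat.cast_zero]
    norm_num
  | succ k ih =>
    have hdef : (1 - X^2) * derivative (QP β k)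
        = QP β (k+1) - C (2*((k:ℝ) - β)) * X * QP β k := by
      rw [QP]; ring
    rw [show k+1+1 = (k+1)+1 from rfl, QP]
    simp only [derivative_add, derivative_mul, derivative_sub, derivative_one,
      derivative_C, derivative_X, derivative_X_pow]
    simp only [ih]
    simp only [derivative_add, derivative_mul, derivative_sub, derivative_one,
      derivative_C, derivative_X, derivative_X_pow]
    simp only [map_mul, map_add, map_sub, map_one, map_natCast, map_ofNat,
      Nat.cast_add, Nat.cast_one, Nat.cast_ofNat, pow_one] at hdef ⊢
    linear_combination (((k : Polynomial ℝ)+1)*((k:Polynomial ℝ)-2*C β)) * hdef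

lemma QP_eval_zero_rec (β : ℝ) (k : ℕ) :
    (QP β (k+2)).eval 0 = ((k:ℝ)+1)*((k:ℝ)-2*β) * (QP β k).eval 0 := by
  rw [show k+2 = (k+1)+1 from rfl, QP, QP_deriv]
  simp

lemma QP_eval_zero_closed (β : ℝ) (m : ℕ) (hm : (m:ℝ) ≤ β) :
    (QP β (2*m)).eval 0
      = (-1)^m * 4^m * Real.Gamma ((m:ℝ)+1/2) * Real.Gamma (β+1)
        / (Real.sqrt π * Real.Gamma (β+1-(m:ℝ))) := by
  induction m with
  | zero =>
    have h1 : Real.Gamma (β+1) ≠ 0 := by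
      have : (0:ℝ) < β + 1 := by push_cast at hm; linarith
      exact (Real.Gamma_pos_of_pos this).ne'
    have h2 : Real.sqrt π ≠ 0 := by positivity
    simp only [Nat.mul_zero, QP, Polynomial.eval_one, pow_zero, Nat.cast_zero, sub_zero,
      one_mul, Real.Gamma_one_half_eq]
    rw [eq_div_iff (by exact mul_ne_zero h2 h1)]
    norm_num [Real.Gamma_one_half_eq]
  | succ m ih =>
    have hm' : (m:ℝ) ≤ β := by push_cast at hm ⊢; linarith
    have hβm : β - (m:ℝ) ≠ 0 := by
      push_cast at hm; intro h; nlinarith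
    have hrec := QP_eval_zero_rec β (2*m)
    have h2m : 2*m+2 = 2*(m+1) := by ring
    rw [h2m] at hrec
    rw [hrec, ih hm']
    have hG : Real.Gamma (β+1-(m:ℝ)) = (β-(m:ℝ)) * Real.Gamma (β-(m:ℝ)) := by
      rw [show β+1-(m:ℝ) = (β-(m:ℝ))+1 from by ring, Real.Gamma_add_one hβm]
    have hG2 : Real.Gamma ((m:ℝ)+1+1/2) = ((m:ℝ)+1/2) * Real.Gamma ((m:ℝ)+1/2) := by
      rw [show (m:ℝ)+1+1/2 = ((m:ℝ)+1/2)+1 from by ring,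
        Real.Gamma_add_one (by positivity)]
    have hGne : Real.Gamma (β-(m:ℝ)) ≠ 0 := by
      have : (0:ℝ) < β - (m:ℝ) + 1 := by push_cast at hm; linarith
      rcases lt_or_eq_of_le (by push_cast at hm; linarith : (0:ℝ) ≤ β - m) with h|h
      · exact (Real.Gamma_pos_of_pos h).ne'
      · exact absurd h.symm hβm
    have h2 : Real.sqrt π ≠ 0 := by positivity
    rw [show β+1-((m:ℕ)+1:ℕ) = β - (m:ℝ) from by push_cast; ring]
    push_cast
    rw [hG2, hG]
    field_simp
    ring

noncomputable def GF (β : ℝ) (k : ℕ) : ℝ → ℝ :=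
  fun t => (1 - t^2) ^ (β - (k:ℝ)) * (QP β k).eval t

lemma hasDerivAt_GF (β : ℝ) (k : ℕ) {t : ℝ} (ht : t ∈ Set.Ioo (-1:ℝ) 1) :
    HasDerivAt (GF β k) (GF β (k+1) t) t := by
  have h1 : (0:ℝ) < 1 - t^2 := by nlinarith [ht.1, ht.2]
  have hb : HasDerivAt (fun t : ℝ => 1 - t^2) (-(2*t)) t := by
    simpa using ((hasDerivAt_pow 2 t).const_sub 1)
  have hr := hb.rpow_const (p := β - (k:ℝ)) (Or.inl h1.ne')
  have hp := (QP β k).hasDerivAt t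
  have H := hr.mul hp
  convert H using 1
  · rfl
  · rfl
  · rfl
  have key : (1 - t^2) ^ (β - (k:ℝ)) = (1 - t^2) ^ (β - ((k:ℝ)+1)) * (1 - t^2) := by
    rw [show β - (k:ℝ) = (β - ((k:ℝ)+1)) + 1 from by ring, Real.rpow_add_one h1.ne']
  have key2 : (1 - t^2) ^ (β - (k:ℝ) - 1) = (1 - t^2) ^ (β - ((k:ℝ)+1)) := by
    rw [show β - (k:ℝ) - 1 = β - ((k:ℝ)+1) from by ring]
  simp only [GF, QP, Polynomial.eval_add, Polynomial.eval_mul, Polynomial.eval_sub,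
    Polynomial.eval_one, Polynomial.eval_pow, Polynomial.eval_X, Polynomial.eval_C,
    Nat.cast_add, Nat.cast_one, key, key2]
  ring

lemma iteratedDeriv_eq_GF (β : ℝ) (k : ℕ) {t : ℝ} (ht : t ∈ Set.Ioo (-1:ℝ) 1) :
    iteratedDeriv k (fun t : ℝ => (1 - t^2) ^ β) t = GF β k t := by
  induction k generalizing t with
  | zero => simp [GF, QP]
  | succ k ih =>
    rw [iteratedDeriv_succ]
    have hev : (iteratedDeriv k fun t : ℝ => (1-t^2)^β) =ᶠ[nhds t] GF β k :=
      Filter.eventuallyEq_of_mem (isOpen_Ioo.mem_nhds ht) (fun x hx => ih hx)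
    rw [hev.deriv_eq, (hasDerivAt_GF β k ht).deriv]

end AuxReLU

open Polynomial in
/-- The Funk–Hecke/Rodrigues expression for the even-degree (`n ≥ 2`) Fourier
coefficient `σ_n` of the ReLU activation on `S^{d−1}` (`d ≥ 3`, `α = (d−2)/2`)
equals the closed form
`Γ(d/2) (−1)^{n/2−1} Γ(n−1) / (√π 2ⁿ Γ(n/2) Γ((n+d+1)/2))`. -/
theorem relu_fourier_coefficient_even (d : ℕ) (hd : 3 ≤ d) (α : ℝ)
    (hα : α = ((d : ℝ) - 2) / 2) (n : ℕ) (hn : 2 ≤ n) (hne : Even n) :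
    (Real.Gamma ((d : ℝ) / 2) / (Real.Gamma (((d : ℝ) - 1) / 2) * Real.sqrt π)) *
        ((-1 : ℝ) ^ n / 2 ^ n) *
        (Real.Gamma (α + 1 / 2) / Real.Gamma (α + (n : ℝ) + 1 / 2)) *
        ∫ t in (0:ℝ)..1,
          t * iteratedDeriv n (fun t : ℝ => (1 - t ^ 2) ^ ((n : ℝ) + α - 1 / 2)) t =
      Real.Gamma ((d : ℝ) / 2) * (-1 : ℝ) ^ (n / 2 - 1) * Real.Gamma ((n : ℝ) - 1) /
        (Real.sqrt π * 2 ^ n * Real.Gamma ((n : ℝ) / 2) *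
          Real.Gamma (((n : ℝ) + (d : ℝ) + 1) / 2)) := by
  have hd3 : (3:ℝ) ≤ (d:ℝ) := by exact_mod_cast hd
  have hα2 : (1:ℝ)/2 ≤ α := by rw [hα]; linarith
  set β : ℝ := (n:ℝ) + α - 1/2 with hβ
  obtain ⟨r, hr⟩ := hne
  have hr1 : 1 ≤ r := by omega
  obtain ⟨m, hm⟩ : ∃ m, r = m + 1 := ⟨r - 1, by omega⟩
  have hnm : n = 2*m + 2 := by omega
  have hncast : (n:ℝ) = 2*(m:ℝ) + 2 := by rw [hnm]; push_cast; ring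
  -- exponent positivity facts
  have hb1 : (0:ℝ) < β - ((2*m+1:ℕ):ℝ) := by rw [hβ, hncast]; push_cast; linarith
  have hb0 : (0:ℝ) < β - ((2*m:ℕ):ℝ) := by rw [hβ, hncast]; push_cast; linarith
  have hbn : (0:ℝ) ≤ β - (n:ℝ) := by rw [hβ]; linarith
  -- continuity of GF
  have hrpow_cont : ∀ γ : ℝ, 0 ≤ γ → Continuous (fun t : ℝ => (1 - t^2) ^ γ) := by
    intro γ hγ
    rw [continuous_iff_continuousAt]
    intro x
    exact (Real.continuousAt_rpow_const _ γ (Or.inr hγ)).comp (by fun_prop)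
  have hGFcont : ∀ k : ℕ, 0 ≤ β - (k:ℝ) → Continuous (GF β k) := by
    intro k hk
    exact (hrpow_cont _ hk).mul (QP β k).continuous
  -- the integrand agrees a.e. with t * GF β n t
  have hIoo : ∀ x ∈ Set.Ioo (0:ℝ) 1, x ∈ Set.Ioo (-1:ℝ) 1 := fun x hx => ⟨by linarith [hx.1], hx.2⟩
  have hone : ∀ᵐ (x:ℝ), x ≠ 1 := by
    have : (MeasureTheory.volume : MeasureTheory.Measure ℝ) {(1:ℝ)} = 0 :=
      MeasureTheory.measure_singleton 1
    rw [MeasureTheory.ae_iff]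
    simpa using this
  have hint_congr : (∫ t in (0:ℝ)..1,
        t * iteratedDeriv n (fun t : ℝ => (1 - t ^ 2) ^ ((n : ℝ) + α - 1 / 2)) t)
      = ∫ t in (0:ℝ)..1, t * GF β n t := by
    apply intervalIntegral.integral_congr_ae
    filter_upwards [hone] with x hx hmem
    rw [Set.uIoc_of_le (by norm_num : (0:ℝ) ≤ 1)] at hmem
    have hx' : x ∈ Set.Ioo (-1:ℝ) 1 :=
      ⟨by linarith [hmem.1], lt_of_le_of_ne hmem.2 hx⟩
    rw [iteratedDeriv_eq_GF β n hx']
  -- FTC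
  have hcontg : ContinuousOn (fun t : ℝ => t * GF β (2*m+1) t - GF β (2*m) t) (Set.Icc 0 1) :=
    ((continuous_id.mul (hGFcont (2*m+1) hb1.le)).sub (hGFcont (2*m) hb0.le)).continuousOn
  have hderivg : ∀ x ∈ Set.Ioo (0:ℝ) 1,
      HasDerivWithinAt (fun t : ℝ => t * GF β (2*m+1) t - GF β (2*m) t)
        (x * GF β n x) (Set.Ioi x) x := by
    intro x hx
    have hx' := hIoo x hx
    have H := ((hasDerivAt_id x).mul (hasDerivAt_GF β (2*m+1) hx')).sub
      (hasDerivAt_GF β (2*m) hx')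
    refine HasDerivAt.hasDerivWithinAt ?_
    convert H using 1
    · rfl
    rw [hnm]
    norm_num
  have hintg : IntervalIntegrable (fun t : ℝ => t * GF β n t) MeasureTheory.volume 0 1 :=
    (continuous_id.mul (hGFcont n hbn)).intervalIntegrable 0 1
  have key := intervalIntegral.integral_eq_sub_of_hasDeriv_right_of_le (by norm_num : (0:ℝ) ≤ 1)
    hcontg hderivg hintg
  -- endpoint values
  have hGF1a : GF β (2*m+1) 1 = 0 := by
    simp only [GF]
    rw [show (1:ℝ)-1^2 = 0 from by norm_num, Real.zero_rpow hb1.ne', zero_mul]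
  have hGF1b : GF β (2*m) 1 = 0 := by
    simp only [GF]
    rw [show (1:ℝ)-1^2 = 0 from by norm_num, Real.zero_rpow hb0.ne', zero_mul]
  have hGF0 : GF β (2*m) 0 = (QP β (2*m)).eval 0 := by
    simp [GF, Real.one_rpow]
  rw [hGF1a, hGF1b, hGF0] at key
  simp only [one_mul, zero_mul, mul_zero, sub_zero, zero_sub, sub_neg_eq_add, zero_add] at key
  rw [hint_congr, key]
  -- closed form for the polynomial value
  have hmβ : (m:ℝ) ≤ β := by rw [hβ, hncast]; linarith
  rw [QP_eval_zero_closed β m hmβ]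
  -- scalar identity
  have hS : (0:ℝ) < Real.sqrt π := Real.sqrt_pos.mpr Real.pi_pos
  have hG1 : (0:ℝ) < Real.Gamma (((d:ℝ)-1)/2) := Real.Gamma_pos_of_pos (by linarith)
  have hG2 : (0:ℝ) < Real.Gamma (β+1) := Real.Gamma_pos_of_pos (by rw [hβ, hncast]; linarith)
  have hG3 : (0:ℝ) < Real.Gamma (((n:ℝ)+(d:ℝ)+1)/2) :=
    Real.Gamma_pos_of_pos (by rw [hncast]; linarith)
  have hfm : ((Nat.factorial m : ℕ):ℝ) ≠ 0 := by
    exact_mod_cast Nat.factorial_ne_zero m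
  have hf2m : ((Nat.factorial (2*m) : ℕ):ℝ) ≠ 0 := by
    exact_mod_cast Nat.factorial_ne_zero (2*m)
  have hdup := Real.Gamma_mul_Gamma_add_half ((m:ℝ)+1/2)
  rw [show (m:ℝ)+1/2+1/2 = ((m:ℕ):ℝ)+1 from by push_cast; ring, Real.Gamma_nat_eq_factorial,
    show 2*((m:ℝ)+1/2) = ((2*m:ℕ):ℝ)+1 from by push_cast; ring, Real.Gamma_nat_eq_factorial,
    show (1:ℝ)-(((2*m:ℕ):ℝ)+1) = -((2*m:ℕ):ℝ) from by push_cast; ring,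
    Real.rpow_neg (by norm_num : (0:ℝ) ≤ 2), Real.rpow_natCast] at hdup
  have hGh : Real.Gamma ((m:ℝ)+1/2)
      = ((Nat.factorial (2*m) : ℕ):ℝ) * ((2:ℝ)^(2*m))⁻¹ * Real.sqrt π
        / ((Nat.factorial m : ℕ):ℝ) := by
    rw [eq_div_iff hfm]; exact hdup
  rw [show α + 1/2 = ((d:ℝ)-1)/2 from by rw [hα]; ring,
    show α + (n:ℝ) + 1/2 = β + 1 from by rw [hβ]; ring,
    show β + 1 - (m:ℝ) = ((n:ℝ)+(d:ℝ)+1)/2 from by rw [hβ, hα, hncast]; ring,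
    show (n:ℝ) - 1 = ((2*m:ℕ):ℝ)+1 from by rw [hncast]; push_cast; ring,
    Real.Gamma_nat_eq_factorial,
    show (n:ℝ)/2 = ((m:ℕ):ℝ)+1 from by rw [hncast]; ring,
    Real.Gamma_nat_eq_factorial,
    show n/2 - 1 = m from by omega,
    (show ((-1:ℝ))^n = 1 from Even.neg_one_pow ⟨r, hr⟩),
    show (2:ℝ)^n = 2^(2*m) * 4 from by rw [hnm, pow_add]; norm_num,
    hGh]
  rw [show (4:ℝ)^m = 2^(2*m) from by rw [pow_mul]; norm_num]
  have h2m : ((2:ℝ)^(2*m)) ≠ 0 := by positivity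
  field_simp
end
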